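/- Let d ≥ 1 be an integer, k ∈ {0,…,d−1}, z ≥ 1 a real number, and ε ∈ (0, 1/(2^{z+1}+2)]. Let P be a finite nonempty set of points in ℝ^d, set ψ = (ε/z)^z, r = 1 + max_{q∈P} D_z(q, 0_d)/(ψ·ε²), and e_{d+1} = (0,…,0,1) ∈ ℝ^{d+1}. Let p ∈ P with lifted point p' = (p | r) ∈ ℝ^{d+1}. Let S be a nonempty affine k-subspace of ℝ^d with D_z(0_d, S) ≥ ε·r, let S'' = {(x | r) : x ∈ S} ⊆ ℝ^{d+1}, and let S' be the linear span of S'' in ℝ^{d+1}. Then |D_z(r·e_{d+1}, S') − D_z(p', S')| ≤ (2^z + 1)·ε·D_z(r·e_{d+1}, S'). -/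

import Mathlib

open Metric Set

/-- `(q | r) ∈ ℝ^{d+1}`: the point `q ∈ ℝ^d` with the coordinate `r` appended. -/
noncomputable def lift {d : ℕ} (q : EuclideanSpace ℝ (Fin d)) (r : ℝ) :
    EuclideanSpace ℝ (Fin (d + 1)) :=
  WithLp.toLp 2 (Fin.snoc (WithLp.ofLp q) r)

lemma lift_castSucc {d : ℕ} (q : EuclideanSpace ℝ (Fin d)) (r : ℝ) (i : Fin d) :
    lift q r i.castSucc = q i := by simp [lift]

lemma lift_last {d : ℕ} (q : EuclideanSpace ℝ (Fin d)) (r : ℝ) :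
    lift q r (Fin.last d) = r := by simp [lift]

lemma lift_add {d : ℕ} (a a' : EuclideanSpace ℝ (Fin d)) (b b' : ℝ) :
    lift a b + lift a' b' = lift (a + a') (b + b') := by
  ext i
  induction i using Fin.lastCases with
  | last => simp [PiLp.add_apply, lift_last]
  | cast i => simp [PiLp.add_apply, lift_castSucc]

lemma lift_smul {d : ℕ} (c : ℝ) (a : EuclideanSpace ℝ (Fin d)) (b : ℝ) :
    c • lift a b = lift (c • a) (c * b) := by
  ext i
  induction i using Fin.lastCases with
  | last => simp [PiLp.smul_apply, lift_last]
  | cast i => simp [PiLp.smul_apply, lift_castSucc]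

lemma lift_zero {d : ℕ} : (lift (0 : EuclideanSpace ℝ (Fin d)) 0) = 0 := by
  ext i
  induction i using Fin.lastCases with
  | last => simp [lift_last]
  | cast i => simp [lift_castSucc]

lemma dist_lift {d : ℕ} (a a' : EuclideanSpace ℝ (Fin d)) (b b' : ℝ) :
    dist (lift a b) (lift a' b') = Real.sqrt (dist a a' ^ 2 + (b - b') ^ 2) := by
  rw [EuclideanSpace.dist_eq, EuclideanSpace.dist_eq]
  congr 1
  rw [Fin.sum_univ_castSucc]
  have h1 : ∀ i : Fin d, dist (lift a b i.castSucc) (lift a' b' i.castSucc) = dist (a i) (a' i) := by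
    intro i; rw [lift_castSucc, lift_castSucc]
  simp only [h1, lift_last, Real.dist_eq, sq_abs]
  rw [Real.sq_sqrt (by positivity)]

/-- Every element of the span of the lifted affine subspace has the form
`lift (t • s₀ + w) (t * r)` with `w` in the direction of `S`. -/
lemma mem_span_lift {d : ℕ} (S : AffineSubspace ℝ (EuclideanSpace ℝ (Fin d)))
    {s₀ : EuclideanSpace ℝ (Fin d)} (hs₀ : s₀ ∈ S) (r : ℝ)
    {y : EuclideanSpace ℝ (Fin (d + 1))}
    (hy : y ∈ Submodule.span ℝ ((fun x => lift x r) '' (S : Set (EuclideanSpace ℝ (Fin d))))) :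
    ∃ t : ℝ, ∃ w, w ∈ S.direction ∧ y = lift (t • s₀ + w) (t * r) := by
  induction hy using Submodule.span_induction with
  | mem x hx =>
    obtain ⟨q, hq, rfl⟩ := hx
    refine ⟨1, q - s₀, AffineSubspace.vsub_mem_direction hq hs₀, ?_⟩
    rw [one_mul, show (1:ℝ) • s₀ + (q - s₀) = q from by module]
  | zero => exact ⟨0, 0, Submodule.zero_mem _, by rw [zero_smul, add_zero, zero_mul, lift_zero]⟩
  | add x x' hx hx' ihx ihx' =>
    obtain ⟨t, w, hw, rfl⟩ := ihx
    obtain ⟨t', w', hw', rfl⟩ := ihx'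
    refine ⟨t + t', w + w', Submodule.add_mem _ hw hw', ?_⟩
    rw [lift_add, add_mul,
      show (t + t') • s₀ + (w + w') = t • s₀ + w + (t' • s₀ + w') from by module]
  | smul c x hx ihx =>
    obtain ⟨t, w, hw, rfl⟩ := ihx
    refine ⟨c * t, c • w, Submodule.smul_mem _ c hw, ?_⟩
    rw [lift_smul, smul_add, smul_smul, mul_assoc]

/-- the key scalar inequality -/
lemma sqrt_two_mul_le {z : ℝ} (hz : 1 ≤ z) :
    Real.sqrt 2 * ((2 : ℝ) ^ z - 1) ≤ z * ((2 : ℝ) ^ z + 1) := by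
  have hs2 : Real.sqrt 2 ^ 2 = 2 := Real.sq_sqrt (by norm_num)
  have hs0 : (0 : ℝ) ≤ Real.sqrt 2 := Real.sqrt_nonneg 2
  have h2z : (2 : ℝ) ≤ (2 : ℝ) ^ z := by
    calc (2 : ℝ) = 2 ^ (1 : ℝ) := (Real.rpow_one 2).symm
    _ ≤ 2 ^ z := Real.rpow_le_rpow_of_exponent_le one_le_two hz
  rcases le_total (Real.sqrt 2) z with h | h
  · nlinarith
  · have hle : (2 : ℝ) ^ z ≤ 2 * Real.sqrt 2 := by
      have h32 : Real.sqrt 2 ≤ 3 / 2 := by nlinarith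
      calc (2 : ℝ) ^ z ≤ 2 ^ (3 / 2 : ℝ) :=
            Real.rpow_le_rpow_of_exponent_le one_le_two (h.trans h32)
      _ = 2 ^ (1 : ℝ) * 2 ^ (1 / 2 : ℝ) := by
            rw [← Real.rpow_add (by norm_num)]; norm_num
      _ = 2 * Real.sqrt 2 := by
            rw [Real.rpow_one, ← Real.sqrt_eq_rpow]
    nlinarith

lemma one_add_rpow_le {z x : ℝ} (hz : 1 ≤ z) (hx0 : 0 ≤ x) (hx1 : x ≤ 1) :
    (1 + x) ^ z ≤ 1 + ((2 : ℝ) ^ z - 1) * x := by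
  have hc := (convexOn_rpow hz).2 (mem_Ici.2 (zero_le_one)) (mem_Ici.2 (by norm_num : (0:ℝ) ≤ 2))
    (by linarith : (0:ℝ) ≤ 1 - x) hx0 (by ring)
  simp only [smul_eq_mul] at hc
  have h1 : (1 - x) * 1 + x * 2 = 1 + x := by ring
  rw [h1] at hc
  calc (1 + x) ^ z ≤ (1 - x) * 1 ^ z + x * 2 ^ z := hc
  _ = 1 + ((2 : ℝ) ^ z - 1) * x := by rw [Real.one_rpow]; ring

lemma scalar_min_bound {D r t X m : ℝ} (hD0 : 0 ≤ D) (hr0 : 0 ≤ r) (hm0 : 0 ≤ m)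
    (hmD : m ≤ D) (hmr : m ≤ r) (h2 : t ^ 2 * D ^ 2 ≤ X ^ 2) :
    m ^ 2 / 2 ≤ X ^ 2 + (r - t * r) ^ 2 := by
  nlinarith [sq_nonneg (2 * t - 1), sq_nonneg (t * D - t * m),
    sq_nonneg ((1 - t) * r - (1 - t) * m), sq_nonneg t, sq_nonneg (1 - t),
    mul_le_mul hmD hmD hm0 hD0, mul_le_mul hmr hmr hm0 hr0]

set_option maxHeartbeats 2000000 in
/-- With `z ≥ 1`, `ε ∈ (0, 1/(2^{z+1}+2)]`, `ψ = (ε/z)^z`,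
`r = 1 + max_{q∈P} dist(q,0)^z/(ψε²)`, `e_{d+1} = (0,…,0,1)`, `p ∈ P`, `p' = (p | r)`:
if `S` is a nonempty affine `k`-subspace of `ℝ^d` with `D_z(0,S) ≥ εr`,
`S'' = {(x|r) : x ∈ S}` and `S'` is the linear span of `S''` in `ℝ^{d+1}`, then
`|D_z(r·e_{d+1},S') − D_z(p',S')| ≤ (2^z+1)·ε·D_z(r·e_{d+1},S')`. -/
theorem stmt4 (d k : ℕ) (hd : 1 ≤ d) (hk : k ≤ d - 1)
    (z ε : ℝ) (hz : 1 ≤ z) (hε : ε ∈ Set.Ioc (0 : ℝ) (1 / (2 ^ (z + 1) + 2)))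
    (P : Finset (EuclideanSpace ℝ (Fin d))) (hP : P.Nonempty)
    (p : EuclideanSpace ℝ (Fin d)) (hp : p ∈ P)
    (ψ r : ℝ) (hψ : ψ = (ε / z) ^ z)
    (hr : r = 1 + P.sup' hP fun q => dist q 0 ^ z / (ψ * ε ^ 2))
    (S : AffineSubspace ℝ (EuclideanSpace ℝ (Fin d)))
    (hS : (S : Set (EuclideanSpace ℝ (Fin d))).Nonempty)
    (hdim : Module.finrank ℝ S.direction = k)
    (hfar : ε * r ≤ Metric.infDist 0 (S : Set (EuclideanSpace ℝ (Fin d))) ^ z)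
    (p' : EuclideanSpace ℝ (Fin (d + 1))) (hp' : p' = lift p r)
    (e : EuclideanSpace ℝ (Fin (d + 1))) (he : e = lift 0 1)
    (S' : Submodule ℝ (EuclideanSpace ℝ (Fin (d + 1))))
    (hS' : S' = Submodule.span ℝ
      ((fun x => lift x r) '' (S : Set (EuclideanSpace ℝ (Fin d))))) :
    |Metric.infDist (r • e) (S' : Set (EuclideanSpace ℝ (Fin (d + 1)))) ^ z -
        Metric.infDist p' (S' : Set (EuclideanSpace ℝ (Fin (d + 1)))) ^ z| ≤
      (2 ^ z + 1) * ε * Metric.infDist (r • e) (S' : Set (EuclideanSpace ℝ (Fin (d + 1)))) ^ z := by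
  obtain ⟨hε0, hεle⟩ := hε
  set D := Metric.infDist 0 (S : Set (EuclideanSpace ℝ (Fin d))) with hD
  set A := Metric.infDist (r • e) (S' : Set (EuclideanSpace ℝ (Fin (d + 1)))) with hA
  set B := Metric.infDist p' (S' : Set (EuclideanSpace ℝ (Fin (d + 1)))) with hB
  have hz0 : (0 : ℝ) < z := lt_of_lt_of_le one_pos hz
  have hψ0 : 0 < ψ := hψ ▸ Real.rpow_pos_of_pos (div_pos hε0 hz0) z
  have hs0 : (0 : ℝ) ≤ Real.sqrt 2 := Real.sqrt_nonneg 2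
  have hs2 : Real.sqrt 2 ^ 2 = 2 := Real.sq_sqrt (by norm_num)
  have h32 : Real.sqrt 2 ≤ 3 / 2 := by nlinarith
  have h2z2 : (4 : ℝ) ≤ 2 ^ (z + 1) := by
    calc (4 : ℝ) = 2 ^ ((2 : ℕ) : ℝ) := by rw [Real.rpow_natCast]; norm_num
    _ ≤ 2 ^ (z + 1) := Real.rpow_le_rpow_of_exponent_le one_le_two (by push_cast; linarith)
  have hε6 : ε ≤ 1 / 6 := by
    refine le_trans hεle ?_
    rw [div_le_div_iff₀ (by linarith) (by norm_num)]
    linarith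
  have hε1 : ε ≤ 1 := by linarith
  have h2zpos : (2 : ℝ) ≤ 2 ^ z := by
    calc (2 : ℝ) = 2 ^ (1 : ℝ) := (Real.rpow_one 2).symm
    _ ≤ 2 ^ z := Real.rpow_le_rpow_of_exponent_le one_le_two hz
  -- bounds on r
  have hsup := Finset.le_sup' (fun q => dist q 0 ^ z / (ψ * ε ^ 2)) hp
  have hr1 : 1 ≤ r := by
    have h0 : (0 : ℝ) ≤ dist p 0 ^ z / (ψ * ε ^ 2) := by positivity
    rw [hr]; linarith [le_trans h0 hsup]
  have hr0 : (0 : ℝ) < r := lt_of_lt_of_le one_pos hr1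
  have hdp : dist p 0 ^ z ≤ r * (ψ * ε ^ 2) := by
    have h1 : dist p 0 ^ z / (ψ * ε ^ 2) ≤ r - 1 := by rw [hr]; linarith [hsup]
    have h2 := (div_le_iff₀ (by positivity : (0:ℝ) < ψ * ε ^ 2)).1 h1
    have h3 := mul_nonneg hψ0.le (sq_nonneg ε)
    have e : r * (ψ * ε ^ 2) = (r - 1) * (ψ * ε ^ 2) + ψ * ε ^ 2 := by ring
    linarith only [h2, h3, e]
  obtain ⟨s₀, hs₀⟩ := hS
  have hre : r • e = lift 0 r := by rw [he, lift_smul, smul_zero, mul_one]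
  have hD0 : 0 ≤ D := Metric.infDist_nonneg
  set m := min D r with hm
  have hm0 : 0 ≤ m := le_min hD0 hr0.le
  have hSne : (S' : Set (EuclideanSpace ℝ (Fin (d + 1)))).Nonempty := ⟨0, S'.zero_mem⟩
  have key : ∀ y ∈ (S' : Set (EuclideanSpace ℝ (Fin (d + 1)))),
      m / Real.sqrt 2 ≤ dist (r • e) y := by
    intro y hy
    have hy' : y ∈ Submodule.span ℝ
        ((fun x => lift x r) '' (S : Set (EuclideanSpace ℝ (Fin d)))) := by
      rw [← hS']; exact hy
    obtain ⟨t, w, hw, rfl⟩ := mem_span_lift S hs₀ r hy'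
    rw [hre, dist_lift]
    have hv : |t| * D ≤ dist 0 (t • s₀ + w) := by
      rcases eq_or_ne t 0 with rfl | ht
      · simpa using dist_nonneg
      · have hmem : s₀ + t⁻¹ • w ∈ S := by
          have h1 : t⁻¹ • w ∈ S.direction := S.direction.smul_mem _ hw
          have h2 := AffineSubspace.vadd_mem_of_mem_direction h1 hs₀
          rwa [vadd_eq_add, add_comm] at h2
        have h1 : t • s₀ + w = t • (s₀ + t⁻¹ • w) := by
          rw [smul_add, smul_smul, mul_inv_cancel₀ ht, one_smul]
        rw [h1, dist_zero_left, norm_smul, Real.norm_eq_abs]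
        have h3 : D ≤ ‖s₀ + t⁻¹ • w‖ := by
          rw [← dist_zero_left]
          exact Metric.infDist_le_dist_of_mem hmem
        exact mul_le_mul_of_nonneg_left h3 (abs_nonneg t)
    set X := dist 0 (t • s₀ + w) with hX
    have hd0 : (0:ℝ) ≤ X := dist_nonneg
    have hsq : (m / Real.sqrt 2) ^ 2 ≤ X ^ 2 + (r - t * r) ^ 2 := by
      have e1 : (m / Real.sqrt 2) ^ 2 = m ^ 2 / 2 := by
        rw [div_pow, hs2]
      rw [e1]
      have h2 : t ^ 2 * D ^ 2 ≤ X ^ 2 := by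
        have h4 : (|t| * D) ^ 2 ≤ X ^ 2 :=
          pow_le_pow_left₀ (by positivity) hv 2
        rwa [mul_pow, sq_abs] at h4
      exact scalar_min_bound hD0 hr0.le hm0 (min_le_left _ _) (min_le_right _ _) h2
    calc m / Real.sqrt 2 = Real.sqrt ((m / Real.sqrt 2) ^ 2) :=
          (Real.sqrt_sq (by positivity)).symm
    _ ≤ Real.sqrt (X ^ 2 + (r - t * r) ^ 2) := Real.sqrt_le_sqrt hsq
  have hAlb : m / Real.sqrt 2 ≤ A := by
    haveI := hSne.to_subtype
    rw [hA, Metric.infDist_eq_iInf]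
    exact le_ciInf fun y => key y y.2
  have hA0' : (0:ℝ) ≤ A := Metric.infDist_nonneg
  have hs2pos : (0 : ℝ) < Real.sqrt 2 ^ z := Real.rpow_pos_of_pos (by positivity) z
  have hmz : ε * r ≤ m ^ z := by
    rcases min_cases D r with ⟨h1, h2⟩ | ⟨h1, h2⟩
    · rw [hm, h1]; exact hfar
    · rw [hm, h1]
      calc ε * r ≤ 1 * r := mul_le_mul_of_nonneg_right hε1 hr0.le
      _ = r ^ (1 : ℝ) := by rw [one_mul, Real.rpow_one]
      _ ≤ r ^ z := Real.rpow_le_rpow_of_exponent_le hr1 hz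
  have hAz : ε * r / Real.sqrt 2 ^ z ≤ A ^ z := by
    have h1 : (m / Real.sqrt 2) ^ z ≤ A ^ z := Real.rpow_le_rpow (by positivity) hAlb hz0.le
    rw [Real.div_rpow hm0 hs0] at h1
    exact le_trans ((div_le_div_iff_of_pos_right hs2pos).2 hmz) h1
  have hA0 : 0 < A := by
    by_contra hc
    push_neg at hc
    have hA00 : A = 0 := le_antisymm hc hA0'
    rw [hA00, Real.zero_rpow hz0.ne'] at hAz
    have : 0 < ε * r / Real.sqrt 2 ^ z := by positivity
    linarith
  -- the ratio η
  set η := Real.sqrt 2 * (ε / z) * ε ^ (z⁻¹ : ℝ) with hηdef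
  have hη0 : 0 ≤ η := by positivity
  have hεinv1 : ε ^ (z⁻¹ : ℝ) ≤ 1 := Real.rpow_le_one hε0.le hε1 (by positivity)
  have hεz : ε / z ≤ ε := div_le_self hε0.le hz
  have hηa : η ≤ Real.sqrt 2 * (ε / z) := by
    calc η = Real.sqrt 2 * (ε / z) * ε ^ (z⁻¹ : ℝ) := rfl
    _ ≤ Real.sqrt 2 * (ε / z) * 1 := by
        apply mul_le_mul_of_nonneg_left hεinv1 (by positivity)
    _ = Real.sqrt 2 * (ε / z) := mul_one _
  have hηb : η ≤ Real.sqrt 2 * ε :=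
    hηa.trans (mul_le_mul_of_nonneg_left hεz hs0)
  have hsε : Real.sqrt 2 * ε ≤ (3 / 2) * (1 / 6) := mul_le_mul h32 hε6 hε0.le (by norm_num)
  have hη1 : η ≤ 1 := by linarith only [hηb, hsε]
  -- dist p 0 ≤ η * A
  have hηz_eq : η ^ z = Real.sqrt 2 ^ z * (ε / z) ^ z * ε := by
    rw [hηdef, Real.mul_rpow (by positivity) (by positivity),
      Real.mul_rpow hs0 (by positivity), Real.rpow_inv_rpow hε0.le hz0.ne']
  have hdpA : dist p 0 ≤ η * A := by
    have hkey : dist p 0 ^ z ≤ (η * A) ^ z := by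
      rw [Real.mul_rpow hη0 hA0', hηz_eq]
      calc dist p 0 ^ z ≤ r * (ψ * ε ^ 2) := hdp
      _ = Real.sqrt 2 ^ z * (ε / z) ^ z * ε * (ε * r / Real.sqrt 2 ^ z) := by
          rw [hψ]; field_simp
      _ ≤ Real.sqrt 2 ^ z * (ε / z) ^ z * ε * A ^ z := by
          apply mul_le_mul_of_nonneg_left hAz (by positivity)
    exact (Real.rpow_le_rpow_iff dist_nonneg (by positivity) hz0).1 hkey
  have hdist : dist p' (r • e) = dist p 0 := by
    rw [hp', hre, dist_lift, sub_self]
    norm_num [Real.sqrt_sq dist_nonneg]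
  have hBA : B ≤ A + η * A := by
    calc B ≤ A + dist p' (r • e) := Metric.infDist_le_infDist_add_dist
    _ ≤ A + η * A := by rw [hdist]; linarith only [hdpA]
  have hAB : A ≤ B + η * A := by
    calc A ≤ B + dist (r • e) p' := Metric.infDist_le_infDist_add_dist
    _ ≤ B + η * A := by rw [dist_comm, hdist]; linarith only [hdpA]
  have hB0 : (0:ℝ) ≤ B := Metric.infDist_nonneg
  have hAzpos : (0:ℝ) ≤ A ^ z := Real.rpow_nonneg hA0' z
  rw [abs_sub_le_iff]
  constructor
  · -- A^z - B^z
    have hBlb : (1 - η) * A ≤ B := by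
      have e : (1 - η) * A = A - η * A := by ring
      linarith only [hAB, e]
    have h1 : ((1 - η) * A) ^ z ≤ B ^ z :=
      Real.rpow_le_rpow (mul_nonneg (by linarith) hA0') hBlb hz0.le
    rw [Real.mul_rpow (by linarith) hA0'] at h1
    have hbern : 1 - z * η ≤ (1 - η) ^ z := by
      have hb := one_add_mul_self_le_rpow_one_add (show (-1:ℝ) ≤ -η by linarith) hz
      have e1 : (1:ℝ) + -η = 1 - η := by ring
      rw [e1] at hb
      linarith only [hb]
    have hstep : A ^ z - B ^ z ≤ z * η * A ^ z := by
      have h5 := mul_le_mul_of_nonneg_right hbern hAzpos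
      have e : (1 - z * η) * A ^ z = A ^ z - z * η * A ^ z := by ring
      linarith only [h1, h5, e]
    have hzη : z * η ≤ (2 ^ z + 1) * ε := by
      have e1 : z * η = Real.sqrt 2 * ε * ε ^ (z⁻¹ : ℝ) := by
        rw [hηdef]; field_simp
      rw [e1]
      have h5 : Real.sqrt 2 * ε * ε ^ (z⁻¹ : ℝ) ≤ Real.sqrt 2 * ε * 1 :=
        mul_le_mul_of_nonneg_left hεinv1 (by positivity)
      have h6 : (3 : ℝ) * ε ≤ (2 ^ z + 1) * ε :=
        mul_le_mul_of_nonneg_right (by linarith) hε0.le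
      have h7 : Real.sqrt 2 * ε ≤ 3 * ε :=
        mul_le_mul_of_nonneg_right (by linarith only [h32]) hε0.le
      linarith only [h5, h6, h7]
    have h8 := mul_le_mul_of_nonneg_right hzη hAzpos
    linarith only [h8, hstep]
  · -- B^z - A^z
    have h1 : B ^ z ≤ ((1 + η) * A) ^ z := by
      refine Real.rpow_le_rpow hB0 ?_ hz0.le
      have e : (1 + η) * A = A + η * A := by ring
      linarith only [hBA, e]
    rw [Real.mul_rpow (by linarith) hA0'] at h1
    have hconv : (1 + η) ^ z ≤ 1 + (2 ^ z - 1) * η := one_add_rpow_le hz hη0 hη1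
    have hstep : B ^ z - A ^ z ≤ (2 ^ z - 1) * η * A ^ z := by
      have h5 := mul_le_mul_of_nonneg_right hconv hAzpos
      have e : (1 + (2 ^ z - 1) * η) * A ^ z = A ^ z + (2 ^ z - 1) * η * A ^ z := by ring
      linarith only [h1, h5, e]
    have hfin : (2 ^ z - 1) * η ≤ (2 ^ z + 1) * ε := by
      have hkey := sqrt_two_mul_le hz
      have h2zm : (0:ℝ) ≤ 2 ^ z - 1 := by linarith
      calc (2 ^ z - 1) * η ≤ (2 ^ z - 1) * (Real.sqrt 2 * (ε / z)) :=
            mul_le_mul_of_nonneg_left hηa h2zm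
      _ ≤ (2 ^ z + 1) * ε := by
          rw [show (2 ^ z - 1) * (Real.sqrt 2 * (ε / z))
              = Real.sqrt 2 * (2 ^ z - 1) * ε / z from by ring, div_le_iff₀ hz0]
          have h9 := mul_le_mul_of_nonneg_right hkey hε0.le
          linarith only [h9]
    have h8 := mul_le_mul_of_nonneg_right hfin hAzpos
    linarith only [h8, hstep]
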